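/- Let R be an algebra over a field F of characteristic 0, let σ be an automorphism of R, and let D be a q-skew σ-derivation on R. Let I = {r ∈ R : r·x ∈ J(R[x;σ,D])}. Then I is (σ,D)-stable: σ(I) = I (σ-invariant, i.e., both σ(I) ⊆ I and σ⁻¹(I) ⊆ I) and D(I) ⊆ I. -/

import Mathlib

/-- `S` is (a copy of) the Ore extension `R[x;σ,D]` of `R`: `ι : R → S` is the inclusion of
coefficients, `X ∈ S` is the variable, every element of `S` is uniquely a polynomial
`Σᵢ ι(aᵢ) * Xⁱ`, and multiplication is governed by `X * a = σ(a) * X + D(a)`. -/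
structure IsOreExtension {R S : Type*} [Ring R] [Ring S]
    (σ : R → R) (D : R → R) (ι : R → S) (X : S) : Prop where
  σ_add : ∀ a b : R, σ (a + b) = σ a + σ b
  σ_mul : ∀ a b : R, σ (a * b) = σ a * σ b
  σ_one : σ 1 = 1
  D_add : ∀ a b : R, D (a + b) = D a + D b
  D_mul : ∀ a b : R, D (a * b) = σ a * D b + D a * b
  ι_add : ∀ a b : R, ι (a + b) = ι a + ι b
  ι_mul : ∀ a b : R, ι (a * b) = ι a * ι b
  ι_one : ι 1 = 1
  X_comm : ∀ a : R, X * ι a = ι (σ a) * X + ι (D a)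
  repr : ∀ s : S, ∃ c : ℕ →₀ R, s = c.sum fun i a => ι a * X ^ i
  uniq : ∀ c : ℕ →₀ R, (c.sum fun i a => ι a * X ^ i) = 0 → c = 0

open Function

/-! ### Jacobson radical facts for noncommutative rings -/

section Jacobson

variable {S : Type*} [Ring S]

theorem OreAux.mem_jacobson_bot_iff {x : S} :
    x ∈ (⊥ : Ideal S).jacobson ↔ ∀ y : S, ∃ z : S, z * (1 - y * x) = 1 := by
  rw [Ideal.mem_jacobson_iff]
  constructor
  · intro H y
    obtain ⟨z, hz⟩ := H (-y)
    rw [Ideal.mem_bot] at hz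
    refine ⟨z, ?_⟩
    have e : z * (1 - y * x) = z * -y * x + z := by noncomm_ring
    rw [e, ← sub_eq_zero]
    exact hz
  · intro H y
    obtain ⟨z, hz⟩ := H (-y)
    refine ⟨z, ?_⟩
    rw [Ideal.mem_bot]
    have e : z * y * x + z - 1 = z * (1 - -y * x) - 1 := by noncomm_ring
    rw [e, hz, sub_self]

theorem OreAux.jacobson_mul_right {x : S} (hx : x ∈ (⊥ : Ideal S).jacobson) (s : S) :
    x * s ∈ (⊥ : Ideal S).jacobson := by
  rw [OreAux.mem_jacobson_bot_iff] at hx ⊢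
  intro y
  obtain ⟨w, hw⟩ := hx (s * y)
  refine ⟨1 + y * x * w * s, ?_⟩
  have e : (1 + y * x * w * s) * (1 - y * (x * s))
      = 1 - y * (x * s) + y * x * (w * (1 - s * y * x)) * s := by noncomm_ring
  rw [e, hw]
  noncomm_ring

theorem OreAux.jacobson_map {f : S →+* S} (hf : Function.Surjective f) {x : S}
    (hx : x ∈ (⊥ : Ideal S).jacobson) : f x ∈ (⊥ : Ideal S).jacobson := by
  rw [OreAux.mem_jacobson_bot_iff] at hx ⊢
  intro y
  obtain ⟨y', rfl⟩ := hf y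
  obtain ⟨z, hz⟩ := hx y'
  refine ⟨f z, ?_⟩
  have e : f z * (1 - f y' * f x) = f (z * (1 - y' * x)) := by
    rw [map_mul, map_sub, map_one, map_mul]
  rw [e, hz, map_one]

end Jacobson

/-! ### Endomorphisms of the Ore extension -/

theorem OreAux.map_zero' {A B : Type*} [AddZeroClass A] [AddGroup B] (f : A → B)
    (hf : ∀ a b, f (a + b) = f a + f b) : f 0 = 0 := by
  have h1 := hf 0 0
  rw [add_zero] at h1
  have h2 : f 0 + f 0 = f 0 + 0 := by rw [add_zero, ← h1]
  exact add_left_cancel h2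

namespace IsOreExtension

variable {R S : Type*} [Ring R] [Ring S] {σ D : R → R} {ι : R → S} {X : S}

theorem ι_zero (h : IsOreExtension σ D ι X) : ι 0 = 0 := OreAux.map_zero' ι h.ι_add

theorem ι_sub (h : IsOreExtension σ D ι X) (a b : R) : ι (a - b) = ι a - ι b :=
  map_sub (AddMonoidHom.mk' ι h.ι_add) a b

theorem sum_injective (h : IsOreExtension σ D ι X) {c d : ℕ →₀ R}
    (hcd : (c.sum fun i a => ι a * X ^ i) = d.sum fun i a => ι a * X ^ i) : c = d := by
  have hsub : (c - d).sum (fun i a => ι a * X ^ i) = 0 := by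
    rw [Finsupp.sum_sub_index (fun i a b => by rw [h.ι_sub, sub_mul]), hcd, sub_self]
  exact sub_eq_zero.mp (h.uniq _ hsub)

/-- An endomorphism of the Ore extension determined by `ι a ↦ ι (φ a)`, `X ↦ ι z * X`. -/
noncomputable def lift (h : IsOreExtension σ D ι X) (φ : R → R) (z : R) : S → S :=
  fun s => (h.repr s).choose.sum fun i a => ι (φ a) * (ι z * X) ^ i

variable (h : IsOreExtension σ D ι X) (φ : R → R) (z : R)

theorem lift_sum (c : ℕ →₀ R) :
    h.lift φ z (c.sum fun i a => ι a * X ^ i) = c.sum fun i a => ι (φ a) * (ι z * X) ^ i := by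
  have hc : (h.repr (c.sum fun i a => ι a * X ^ i)).choose = c :=
    h.sum_injective (h.repr _).choose_spec.symm
  unfold lift
  rw [hc]

include h in
theorem lift_g_zero (φadd : ∀ a b, φ (a + b) = φ a + φ b) (i : ℕ) :
    ι (φ 0) * (ι z * X) ^ i = 0 := by
  rw [OreAux.map_zero' φ φadd, h.ι_zero, zero_mul]

theorem lift_add (φadd : ∀ a b, φ (a + b) = φ a + φ b) (s t : S) :
    h.lift φ z (s + t) = h.lift φ z s + h.lift φ z t := by
  obtain ⟨c, rfl⟩ := h.repr s
  obtain ⟨d, rfl⟩ := h.repr t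
  rw [← Finsupp.sum_add_index' (fun i => by rw [h.ι_zero, zero_mul])
    (fun i a b => by rw [h.ι_add, add_mul]), h.lift_sum, h.lift_sum, h.lift_sum,
    Finsupp.sum_add_index' (h.lift_g_zero φ z φadd) (fun i a b => by rw [φadd, h.ι_add, add_mul])]

theorem lift_monomial (φadd : ∀ a b, φ (a + b) = φ a + φ b) (i : ℕ) (a : R) :
    h.lift φ z (ι a * X ^ i) = ι (φ a) * (ι z * X) ^ i := by
  have e : ι a * X ^ i = (Finsupp.single i a).sum fun i a => ι a * X ^ i := by
    rw [Finsupp.sum_single_index (by rw [h.ι_zero, zero_mul])]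
  rw [e, h.lift_sum, Finsupp.sum_single_index (h.lift_g_zero φ z φadd i)]

theorem lift_mul_X (s : S) : h.lift φ z (s * X) = h.lift φ z s * (ι z * X) := by
  obtain ⟨c, rfl⟩ := h.repr s
  have e : (c.sum fun i a => ι a * X ^ i) * X
      = (c.mapDomain (· + 1)).sum fun i a => ι a * X ^ i := by
    rw [Finsupp.sum_mapDomain_index_inj (add_left_injective 1), Finsupp.sum_mul]
    exact Finsupp.sum_congr fun i _ => by rw [mul_assoc, ← pow_succ]
  rw [e, h.lift_sum, h.lift_sum,
    Finsupp.sum_mapDomain_index_inj (add_left_injective 1), Finsupp.sum_mul]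
  exact Finsupp.sum_congr fun i _ => by rw [mul_assoc, ← pow_succ]

include h in
theorem lift_Y_comm (hz1 : ∀ a, z * σ (φ a) = φ (σ a) * z)
    (hz2 : ∀ a, z * D (φ a) = φ (D a)) (a : R) :
    (ι z * X) * ι (φ a) = ι (φ (σ a)) * (ι z * X) + ι (φ (D a)) := by
  rw [mul_assoc, h.X_comm (φ a), mul_add, ← mul_assoc, ← h.ι_mul, hz1, ← h.ι_mul, hz2,
    h.ι_mul, mul_assoc]

theorem lift_monomial_mul_ι (φadd : ∀ a b, φ (a + b) = φ a + φ b)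
    (φmul : ∀ a b, φ (a * b) = φ a * φ b)
    (hz1 : ∀ a, z * σ (φ a) = φ (σ a) * z) (hz2 : ∀ a, z * D (φ a) = φ (D a))
    (i : ℕ) (a b : R) :
    h.lift φ z (ι b * X ^ i * ι a) = ι (φ b) * (ι z * X) ^ i * ι (φ a) := by
  induction i generalizing a with
  | zero =>
    simp only [pow_zero, mul_one]
    rw [← h.ι_mul, ← h.ι_mul, ← φmul]
    have e : ι (b * a) = ι (b * a) * X ^ 0 := by rw [pow_zero, mul_one]
    rw [e, h.lift_monomial φ z φadd, pow_zero, mul_one]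
  | succ i IH =>
    have e : ι b * X ^ (i + 1) * ι a
        = (ι b * X ^ i * ι (σ a)) * X + ι b * X ^ i * ι (D a) := by
      calc ι b * X ^ (i + 1) * ι a = ι b * X ^ i * (X * ι a) := by
            rw [pow_succ]; noncomm_ring
        _ = ι b * X ^ i * (ι (σ a) * X + ι (D a)) := by rw [h.X_comm]
        _ = (ι b * X ^ i * ι (σ a)) * X + ι b * X ^ i * ι (D a) := by noncomm_ring
    have e2 : ι (φ b) * (ι z * X) ^ (i + 1) * ι (φ a)
        = ι (φ b) * ((ι z * X) ^ i * ((ι z * X) * ι (φ a))) := by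
      rw [pow_succ]; noncomm_ring
    rw [e, h.lift_add φ z φadd, h.lift_mul_X φ z, IH, IH, e2,
      h.lift_Y_comm φ z hz1 hz2 a]
    noncomm_ring

theorem lift_mul_ι (φadd : ∀ a b, φ (a + b) = φ a + φ b)
    (φmul : ∀ a b, φ (a * b) = φ a * φ b)
    (hz1 : ∀ a, z * σ (φ a) = φ (σ a) * z) (hz2 : ∀ a, z * D (φ a) = φ (D a))
    (s : S) (a : R) :
    h.lift φ z (s * ι a) = h.lift φ z s * ι (φ a) := by
  obtain ⟨c, rfl⟩ := h.repr s
  have hsum : ∀ (d : ℕ →₀ R) (g : ℕ → R → S),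
      h.lift φ z (d.sum g) = d.sum fun i b => h.lift φ z (g i b) := fun d g =>
    map_finsuppSum (AddMonoidHom.mk' (h.lift φ z) (h.lift_add φ z φadd)) d g
  have e : (c.sum fun i b => ι b * X ^ i) * ι a = c.sum fun i b => ι b * X ^ i * ι a :=
    Finsupp.sum_mul _ _
  rw [e, hsum, h.lift_sum φ z, Finsupp.sum_mul]
  exact Finsupp.sum_congr fun i hi => h.lift_monomial_mul_ι φ z φadd φmul hz1 hz2 i a _

theorem lift_mul_monomial (φadd : ∀ a b, φ (a + b) = φ a + φ b)
    (φmul : ∀ a b, φ (a * b) = φ a * φ b)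
    (hz1 : ∀ a, z * σ (φ a) = φ (σ a) * z) (hz2 : ∀ a, z * D (φ a) = φ (D a))
    (s : S) (j : ℕ) (a : R) :
    h.lift φ z (s * (ι a * X ^ j)) = h.lift φ z s * (ι (φ a) * (ι z * X) ^ j) := by
  induction j with
  | zero => rw [pow_zero, mul_one, pow_zero, mul_one, h.lift_mul_ι φ z φadd φmul hz1 hz2]
  | succ j IH =>
    have e : s * (ι a * X ^ (j + 1)) = s * (ι a * X ^ j) * X := by
      rw [pow_succ]; noncomm_ring
    rw [e, h.lift_mul_X φ z, IH, pow_succ]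
    noncomm_ring

theorem lift_mul (φadd : ∀ a b, φ (a + b) = φ a + φ b)
    (φmul : ∀ a b, φ (a * b) = φ a * φ b)
    (hz1 : ∀ a, z * σ (φ a) = φ (σ a) * z) (hz2 : ∀ a, z * D (φ a) = φ (D a))
    (s t : S) :
    h.lift φ z (s * t) = h.lift φ z s * h.lift φ z t := by
  obtain ⟨d, rfl⟩ := h.repr t
  have hsum : ∀ (c : ℕ →₀ R) (g : ℕ → R → S),
      h.lift φ z (c.sum g) = c.sum fun i b => h.lift φ z (g i b) := fun c g =>
    map_finsuppSum (AddMonoidHom.mk' (h.lift φ z) (h.lift_add φ z φadd)) c g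
  rw [Finsupp.mul_sum, hsum, h.lift_sum φ z, Finsupp.mul_sum]
  exact Finsupp.sum_congr fun j hj => h.lift_mul_monomial φ z φadd φmul hz1 hz2 _ j _

theorem lift_one (φadd : ∀ a b, φ (a + b) = φ a + φ b) (φone : φ 1 = 1) :
    h.lift φ z 1 = 1 := by
  have e : (1 : S) = ι 1 * X ^ 0 := by rw [pow_zero, mul_one, h.ι_one]
  conv_lhs => rw [e]
  rw [h.lift_monomial φ z φadd, φone, h.ι_one, pow_zero, mul_one]

include h in
/-- The key existence statement: a surjective ring endomorphism of the Ore extension sending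
`ι a` to `ι (φ a)` and `X` to `ι z * X`. -/
theorem exists_ringHom (φadd : ∀ a b, φ (a + b) = φ a + φ b)
    (φmul : ∀ a b, φ (a * b) = φ a * φ b) (φone : φ 1 = 1) (φsurj : Function.Surjective φ)
    (hz1 : ∀ a, z * σ (φ a) = φ (σ a) * z) (hz2 : ∀ a, z * D (φ a) = φ (D a))
    (z' : R) (hz' : z' * z = 1) :
    ∃ f : S →+* S, Function.Surjective f ∧ (∀ a, f (ι a) = ι (φ a)) ∧ f X = ι z * X := by
  refine ⟨RingHom.mk' ⟨⟨h.lift φ z, h.lift_one φ z φadd φone⟩,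
    h.lift_mul φ z φadd φmul hz1 hz2⟩ (h.lift_add φ z φadd), ?_, ?_, ?_⟩
  · -- surjectivity
    set f : S →+* S := RingHom.mk' ⟨⟨h.lift φ z, h.lift_one φ z φadd φone⟩,
      h.lift_mul φ z φadd φmul hz1 hz2⟩ (h.lift_add φ z φadd) with hf
    intro s
    obtain ⟨c, rfl⟩ := h.repr s
    have hι : ∀ b : R, ι b ∈ f.range := by
      intro b
      obtain ⟨a, rfl⟩ := φsurj b
      refine ⟨ι a, ?_⟩
      show h.lift φ z (ι a) = ι (φ a)
      have e : ι a = ι a * X ^ 0 := by rw [pow_zero, mul_one]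
      conv_lhs => rw [e]
      rw [h.lift_monomial φ z φadd, pow_zero, mul_one]
    have hX : X ∈ f.range := by
      have hzmem : ι z * X ∈ f.range := by
        refine ⟨X, ?_⟩
        show h.lift φ z X = ι z * X
        have e1 := h.lift_monomial φ z φadd 1 1
        rw [pow_one, pow_one, φone, h.ι_one, one_mul, one_mul] at e1
        exact e1
      have : ι z' * (ι z * X) ∈ f.range := mul_mem (hι z') hzmem
      rwa [← mul_assoc, ← h.ι_mul, hz', h.ι_one, one_mul] at this
    have hmem : (c.sum fun i a => ι a * X ^ i) ∈ f.range := by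
      rw [Finsupp.sum]
      exact sum_mem fun i _ => mul_mem (hι _) (pow_mem hX i)
    exact RingHom.mem_range.mp hmem
  · intro a
    show h.lift φ z (ι a) = ι (φ a)
    have e : ι a = ι a * X ^ 0 := by rw [pow_zero, mul_one]
    conv_lhs => rw [e]
    rw [h.lift_monomial φ z φadd, pow_zero, mul_one]
  · show h.lift φ z X = ι z * X
    have eX : h.lift φ z X = ι z * X := by
      have e1 := h.lift_monomial φ z φadd 1 1
      rw [pow_one, pow_one, φone, h.ι_one, one_mul, one_mul] at e1
      exact e1
    exact eX

end IsOreExtension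

/-- If `R` is an algebra over a field of characteristic `0`, `σ` is an automorphism and `D` a
`q`-skew `σ`-derivation, then `I = {r ∈ R : r·x ∈ J(R[x;σ,D])}` is `(σ,D)`-stable:
`σ(I) = I` (equivalently `σ(I) ⊆ I` and `σ⁻¹(I) ⊆ I`) and `D(I) ⊆ I`. -/
theorem I_sigma_D_stable {F R S : Type*} [Field F] [CharZero F]
    [Ring R] [Algebra F R] [Ring S]
    (σ D : R → R) (ι : R → S) (X : S)
    (hOre : IsOreExtension σ D ι X) (hσ : Function.Bijective σ)
    (q : F) (hq : q ≠ 0) (hskew : ∀ a : R, D (σ a) = q • σ (D a)) :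
    (∀ r : R, ι r * X ∈ (⊥ : Ideal S).jacobson ↔ ι (σ r) * X ∈ (⊥ : Ideal S).jacobson) ∧
      ∀ r : R, ι r * X ∈ (⊥ : Ideal S).jacobson → ι (D r) * X ∈ (⊥ : Ideal S).jacobson := by
  classical
  have hσρ : ∀ a, σ ((Equiv.ofBijective σ hσ).symm a) = a :=
    fun a => (Equiv.ofBijective σ hσ).apply_symm_apply a
  set ρ : R → R := fun a => (Equiv.ofBijective σ hσ).symm a with hρdef
  have hρσ : ∀ a, ρ (σ a) = a := fun a => (Equiv.ofBijective σ hσ).symm_apply_apply a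
  have σinj := hσ.1
  have hc : ∀ (t : F) (w : R), (t • (1 : R)) * w = t • w := fun t w => by
    rw [smul_mul_assoc, one_mul]
  have hc' : ∀ (t : F) (w : R), w * (t • (1 : R)) = t • w := fun t w => by
    rw [mul_smul_comm, mul_one]
  have hcent : ∀ (t : F) (w : R), (t • (1 : R)) * w = w * (t • (1 : R)) := fun t w => by
    rw [hc, hc']
  have hqq : (q⁻¹ • (1 : R)) * (q • (1 : R)) = 1 := by
    rw [hc, smul_smul, inv_mul_cancel₀ hq, one_smul]
  have hqq' : (q • (1 : R)) * (q⁻¹ • (1 : R)) = 1 := by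
    rw [hc, smul_smul, mul_inv_cancel₀ hq, one_smul]
  -- the positive twist
  obtain ⟨fP, hfPsurj, hfPι, hfPX⟩ := hOre.exists_ringHom σ (q⁻¹ • 1)
    hOre.σ_add hOre.σ_mul hOre.σ_one hσ.2
    (fun a => hcent q⁻¹ (σ (σ a)))
    (fun a => by rw [hskew a, hc, smul_smul, inv_mul_cancel₀ hq, one_smul])
    (q • 1) hqq'
  -- the negative twist
  have ρadd : ∀ a b, ρ (a + b) = ρ a + ρ b := fun a b =>
    σinj (by rw [hσρ, hOre.σ_add, hσρ, hσρ])
  have ρmul : ∀ a b, ρ (a * b) = ρ a * ρ b := fun a b =>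
    σinj (by rw [hσρ, hOre.σ_mul, hσρ, hσρ])
  have ρone : ρ 1 = 1 := σinj (by rw [hσρ, hOre.σ_one])
  have ρsurj : Function.Surjective ρ := fun a => ⟨σ a, hρσ a⟩
  have ρcent : ∀ w, ρ (q • (1 : R)) * w = w * ρ (q • (1 : R)) := fun w =>
    σinj (by simp only [hOre.σ_mul, hσρ, ρ]; rw [hcent])
  have hz1m : ∀ a, ρ (q • (1 : R)) * σ (ρ a) = ρ (σ a) * ρ (q • (1 : R)) := fun a => by
    rw [hσρ a, hρσ a]; exact ρcent a
  have hz2m : ∀ a, ρ (q • (1 : R)) * D (ρ a) = ρ (D a) := fun a =>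
    σinj (by simp only [hOre.σ_mul, hσρ, ρ]; rw [hc, ← hskew (ρ a), hσρ])
  have hzm' : ρ (q⁻¹ • (1 : R)) * ρ (q • (1 : R)) = 1 := by rw [← ρmul, hqq, ρone]
  obtain ⟨fM, hfMsurj, hfMι, hfMX⟩ := hOre.exists_ringHom ρ (ρ (q • 1))
    ρadd ρmul ρone ρsurj hz1m hz2m (ρ (q⁻¹ • 1)) hzm'
  -- forward direction of σ-stability
  have fwd : ∀ r : R, ι r * X ∈ (⊥ : Ideal S).jacobson →
      ι (σ r) * X ∈ (⊥ : Ideal S).jacobson := by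
    intro r hr
    have h1 : fP (ι r * X) ∈ (⊥ : Ideal S).jacobson := OreAux.jacobson_map hfPsurj hr
    rw [map_mul, hfPι, hfPX] at h1
    have h2 := Ideal.mul_mem_left _ (ι (q • (1 : R))) h1
    have eR : (q • (1 : R)) * (σ r * (q⁻¹ • (1 : R))) = σ r := by
      rw [hc', hc, smul_smul, mul_inv_cancel₀ hq, one_smul]
    have e : ι ((q • (1 : R)) * (σ r * (q⁻¹ • (1 : R)))) * X =
        ι (q • (1 : R)) * (ι (σ r) * (ι (q⁻¹ • (1 : R)) * X)) := by
      rw [hOre.ι_mul, hOre.ι_mul, mul_assoc, mul_assoc]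
    rw [← e, eR] at h2
    exact h2
  -- backward direction of σ-stability
  have bwd : ∀ r : R, ι (σ r) * X ∈ (⊥ : Ideal S).jacobson →
      ι r * X ∈ (⊥ : Ideal S).jacobson := by
    intro r hr
    have h1 : fM (ι (σ r) * X) ∈ (⊥ : Ideal S).jacobson := OreAux.jacobson_map hfMsurj hr
    rw [map_mul, hfMι, hfMX, hρσ r] at h1
    have h2 := Ideal.mul_mem_left _ (ι (ρ (q⁻¹ • (1 : R)))) h1
    have eR : ρ (q⁻¹ • (1 : R)) * (r * ρ (q • (1 : R))) = r := by
      rw [← ρcent r, ← mul_assoc, hzm', one_mul]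
    have e : ι (ρ (q⁻¹ • (1 : R)) * (r * ρ (q • (1 : R)))) * X =
        ι (ρ (q⁻¹ • (1 : R))) * (ι r * (ι (ρ (q • (1 : R))) * X)) := by
      rw [hOre.ι_mul, hOre.ι_mul, mul_assoc, mul_assoc]
    rw [← e, eR] at h2
    exact h2
  refine ⟨fun r => ⟨fwd r, bwd r⟩, fun r hr => ?_⟩
  have a1 : X * (ι r * X) ∈ (⊥ : Ideal S).jacobson := Ideal.mul_mem_left _ X hr
  have a3 : (ι (σ r) * X) * X ∈ (⊥ : Ideal S).jacobson :=
    OreAux.jacobson_mul_right (fwd r hr) X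
  have e : ι (D r) * X = X * (ι r * X) - (ι (σ r) * X) * X := by
    rw [← mul_assoc, hOre.X_comm r, add_mul, add_sub_cancel_left]
  rw [e]
  exact Submodule.sub_mem _ a1 a3
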